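/- There exist exactly two unordered partitions of the vertex set of CQ_3 into two 4-element sets each of which induces a 4-cycle; that is, there are partitions {V1, V2} and {V3, V4} of the vertex set of CQ_3 with ⟨V_i⟩ isomorphic to C_4 for i = 1, 2, 3, 4, these two partitions are distinct, and every partition of the vertex set of CQ_3 into two sets each inducing a 4-cycle equals {V1, V2} or {V3, V4}. Moreover, ⟨V_i ∩ V_j⟩ is isomorphic to P_2 (the intersection consists of exactly two adjacent vertices) for every i in {1, 2} and j in {3, 4}. -/

import Mathlib

/-- Vertices of the 3-dimensional cubes: binary strings `x1x2x3` of length 3. -/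
abbrev Vtx3 := Bool × Bool × Bool

/-- The 12 edges of the 3-dimensional crossed cube `CQ_3`. -/
def cq3EdgeList : List (Vtx3 × Vtx3) :=
  [ ((false,false,false),(false,false,true)),
    ((false,true,false),(false,true,true)),
    ((true,false,false),(true,false,true)),
    ((true,true,false),(true,true,true)),
    ((false,false,false),(false,true,false)),
    ((false,false,true),(false,true,true)),
    ((true,false,false),(true,true,false)),
    ((true,false,true),(true,true,true)),
    ((false,false,false),(true,false,false)),
    ((false,true,false),(true,true,false)),
    ((false,false,true),(true,true,true)),
    ((false,true,true),(true,false,true)) ]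

/-- The 3-dimensional crossed cube `CQ_3`. -/
def CQ3 : SimpleGraph Vtx3 where
  Adj u v := (u, v) ∈ cq3EdgeList ∨ (v, u) ∈ cq3EdgeList
  symm := ⟨fun _ _ h => Or.symm h⟩
  loopless := ⟨by
    intro x
    revert x
    decide⟩

instance : DecidableRel CQ3.Adj :=
  fun u v => inferInstanceAs (Decidable ((u, v) ∈ cq3EdgeList ∨ (v, u) ∈ cq3EdgeList))

/-- `X` is a 4-element vertex subset of `CQ_3` inducing a 4-cycle. -/
def IndC4 (X : Finset Vtx3) : Prop :=
  X.card = 4 ∧ Nonempty (CQ3.induce (↑X) ≃g SimpleGraph.cycleGraph 4)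

instance decNonemptyIso {V W : Type*} [Fintype V] [Fintype W] [DecidableEq V] [DecidableEq W]
    (G : SimpleGraph V) (H : SimpleGraph W) [DecidableRel G.Adj] [DecidableRel H.Adj] :
    Decidable (Nonempty (G ≃g H)) :=
  decidable_of_iff (∃ e : V ≃ W, ∀ a b, G.Adj a b ↔ H.Adj (e a) (e b))
    ⟨fun ⟨e, h⟩ => ⟨⟨e, fun {a b} => (h a b).symm⟩⟩,
     fun ⟨e⟩ => ⟨e.toEquiv, fun a b => (e.map_rel_iff (a := a) (b := b)).symm⟩⟩

instance : DecidableRel (SimpleGraph.pathGraph 2).Adj := fun u v =>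
  decidable_of_iff _ SimpleGraph.pathGraph_adj.symm

instance (X : Finset Vtx3) : Decidable (IndC4 X) := inferInstanceAs (Decidable (_ ∧ _))

def SA : Finset Vtx3 := {(false,false,false),(false,false,true),(false,true,false),(false,true,true)}
def SB : Finset Vtx3 := SAᶜ
def SC : Finset Vtx3 := {(false,false,false),(true,false,false),(true,true,false),(false,true,false)}
def SD : Finset Vtx3 := SCᶜ

lemma deg_transfer (X : Finset Vtx3) (h : IndC4 X) :
    ∀ v ∈ X, (X.filter (CQ3.Adj v)).card = 2 := by
  obtain ⟨hcard, ⟨e⟩⟩ := h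
  intro v hv
  have hdeg : ∀ w : Fin 4, (SimpleGraph.cycleGraph 4).degree w = 2 := by decide
  have h1 : (CQ3.induce (↑X)).degree ⟨v, hv⟩ = 2 := by
    rw [← SimpleGraph.card_neighborSet_eq_degree,
      Fintype.card_congr (e.mapNeighborSet ⟨v, hv⟩),
      SimpleGraph.card_neighborSet_eq_degree, hdeg]
  rw [← h1, ← SimpleGraph.card_neighborSet_eq_degree]
  rw [← Fintype.card_coe (X.filter (CQ3.Adj v))]
  apply Fintype.card_congr
  refine ⟨fun u => ⟨⟨u.1, ?_⟩, ?_⟩, fun w => ⟨w.1.1, ?_⟩, fun u => rfl, fun w => rfl⟩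
  · exact Finset.mem_coe.mpr (Finset.mem_filter.mp u.2).1
  · exact (Finset.mem_filter.mp u.2).2
  · exact Finset.mem_filter.mpr ⟨Finset.mem_coe.mp w.1.2, w.2⟩

instance instKey : Decidable (∀ W : Finset Vtx3, W.card = 4 →
    (∀ v ∈ W, (W.filter (CQ3.Adj v)).card = 2) →
    (∀ v ∈ Wᶜ, (Wᶜ.filter (CQ3.Adj v)).card = 2) →
    ({W, Wᶜ} : Finset (Finset Vtx3)) = {SA, SB} ∨
    ({W, Wᶜ} : Finset (Finset Vtx3)) = {SC, SD}) :=
  Fintype.decidableForallFintype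

set_option maxRecDepth 10000 in
lemma key : ∀ W : Finset Vtx3, W.card = 4 →
    (∀ v ∈ W, (W.filter (CQ3.Adj v)).card = 2) →
    (∀ v ∈ Wᶜ, (Wᶜ.filter (CQ3.Adj v)).card = 2) →
    ({W, Wᶜ} : Finset (Finset Vtx3)) = {SA, SB} ∨
    ({W, Wᶜ} : Finset (Finset Vtx3)) = {SC, SD} := by decide

/-- There are exactly two unordered partitions of `V(CQ_3)` into two 4-element
sets each inducing a 4-cycle, and any part of one partition meets any part of
the other in exactly two adjacent vertices (inducing `P_2`). -/
theorem cq3_two_c4_partitions :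
    ∃ A B C D : Finset Vtx3,
      (Disjoint A B ∧ A ∪ B = Finset.univ ∧ IndC4 A ∧ IndC4 B) ∧
      (Disjoint C D ∧ C ∪ D = Finset.univ ∧ IndC4 C ∧ IndC4 D) ∧
      ({A, B} : Finset (Finset Vtx3)) ≠ ({C, D} : Finset (Finset Vtx3)) ∧
      (∀ W₁ W₂ : Finset Vtx3, Disjoint W₁ W₂ → W₁ ∪ W₂ = Finset.univ →
        IndC4 W₁ → IndC4 W₂ →
        ({W₁, W₂} : Finset (Finset Vtx3)) = ({A, B} : Finset (Finset Vtx3)) ∨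
        ({W₁, W₂} : Finset (Finset Vtx3)) = ({C, D} : Finset (Finset Vtx3))) ∧
      (∀ P ∈ ({A, B} : Finset (Finset Vtx3)), ∀ Q ∈ ({C, D} : Finset (Finset Vtx3)),
        Nonempty (CQ3.induce (↑(P ∩ Q)) ≃g SimpleGraph.pathGraph 2)) := by
  refine ⟨SA, SB, SC, SD, ⟨by decide, by decide, by decide, by decide⟩,
    ⟨by decide, by decide, by decide, by decide⟩, by decide, ?_, ?_⟩
  · intro W₁ W₂ hd hu h1 h2
    have hc : W₂ = W₁ᶜ := by
      have h : IsCompl W₁ W₂ := ⟨hd, codisjoint_iff.mpr (by simpa using hu)⟩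
      exact h.compl_eq.symm
    subst hc
    exact key W₁ h1.1 (deg_transfer _ h1) (deg_transfer _ h2)
  · intro P hP Q hQ
    simp only [Finset.mem_insert, Finset.mem_singleton] at hP hQ
    rcases hP with rfl | rfl <;> rcases hQ with rfl | rfl <;> decide
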